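/- arXiv:2404.18108 — 2 statements merged into one kernel-verified Lean document; each statement's English description precedes it below -/
import Mathlib

section
/- Let γ > 1, let h(ρ) = ρ^γ/(γ−1), and let 0 < δ ≤ M̄ < ∞. Then there exist a real number R ≥ M̄ + 1 and constants C₁, C₂ > 0 (depending only on γ, δ, M̄) such that for every ρ ≥ 0 and every ρ̄ ∈ [δ, M̄]: if ρ ∈ [0, R] then h(ρ | ρ̄) ≥ C₁ |ρ − ρ̄|², and if ρ > R then h(ρ | ρ̄) ≥ C₂ |ρ − ρ̄|^γ. -/
open Filter

/-- Internal energy function `h(ρ) = ρ^γ/(γ-1)`. -/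
noncomputable def internalEnergy (γ ρ : ℝ) : ℝ := ρ ^ γ / (γ - 1)

/-- Relative internal energy `h(ρ|σ) = h(ρ) - h(σ) - h'(σ)(ρ - σ)`,
where `h'(σ) = γ σ^(γ-1)/(γ-1)`. -/
noncomputable def relInternalEnergy (γ ρ σ : ℝ) : ℝ :=
  internalEnergy γ ρ - internalEnergy γ σ - (γ / (γ - 1)) * σ ^ (γ - 1) * (ρ - σ)

lemma relSelf (γ σ : ℝ) : relInternalEnergy γ σ σ = 0 := by
  simp [relInternalEnergy, internalEnergy]

/-- Strong convexity lower bound on a compact interval away from 0. -/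
lemma key_quad (γ a R m : ℝ) (hγ : 1 < γ) (ha : 0 < a)
    (hmx : ∀ x ∈ Set.Icc a R, m ≤ x ^ (γ - 2))
    {ρ σ : ℝ} (hρ : ρ ∈ Set.Icc a R) (hσ : σ ∈ Set.Icc a R) :
    γ * m / 2 * (ρ - σ) ^ 2 ≤ relInternalEnergy γ ρ σ := by
  have hγ1 : (0:ℝ) < γ - 1 := by linarith
  have hγne : γ - 1 ≠ 0 := ne_of_gt hγ1
  set G : ℝ → ℝ := fun x => γ / (γ - 1) * x ^ (γ - 1) - γ * m * x with hGdef
  have hG : ∀ x : ℝ, x ≠ 0 → HasDerivAt G (γ * (x ^ (γ - 2) - m)) x := by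
    intro x hx
    have h1 : HasDerivAt (fun y : ℝ => y ^ (γ - 1)) ((γ - 1) * x ^ (γ - 1 - 1)) x :=
      Real.hasDerivAt_rpow_const (Or.inl hx)
    have h2 := (h1.const_mul (γ / (γ - 1))).sub ((hasDerivAt_id x).const_mul (γ * m))
    refine h2.congr_deriv ?_
    have he : γ - 1 - 1 = γ - 2 := by ring
    rw [he]
    field_simp
  have hGmono : MonotoneOn G (Set.Icc a R) := by
    apply monotoneOn_of_hasDerivWithinAt_nonneg (convex_Icc a R)
      (f' := fun x => γ * (x ^ (γ - 2) - m))
    · intro x hx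
      exact ((hG x (ne_of_gt (lt_of_lt_of_le ha hx.1))).continuousAt).continuousWithinAt
    · intro x hx
      rw [interior_Icc] at hx
      exact ((hG x (ne_of_gt (lt_of_lt_of_le ha hx.1.le))).hasDerivWithinAt)
    · intro x hx
      rw [interior_Icc] at hx
      have := hmx x ⟨hx.1.le, hx.2.le⟩
      nlinarith
  set F : ℝ → ℝ := fun x => relInternalEnergy γ x σ - γ * m / 2 * (x - σ) ^ 2 with hFdef
  have hF : ∀ x : ℝ, x ≠ 0 → HasDerivAt F (G x - G σ) x := by
    intro x hx
    have h1 : HasDerivAt (fun y : ℝ => y ^ γ) (γ * x ^ (γ - 1)) x :=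
      Real.hasDerivAt_rpow_const (Or.inl hx)
    have h2 := h1.div_const (γ - 1)
    have h3 : HasDerivAt (fun y : ℝ => γ / (γ - 1) * σ ^ (γ - 1) * (y - σ))
        (γ / (γ - 1) * σ ^ (γ - 1)) x := by
      simpa using ((hasDerivAt_id x).sub_const σ).const_mul (γ / (γ - 1) * σ ^ (γ - 1))
    have h4 : HasDerivAt (fun y : ℝ => γ * m / 2 * (y - σ) ^ 2) (γ * m * (x - σ)) x := by
      have h := (((hasDerivAt_id x).sub_const σ).pow 2).const_mul (γ * m / 2)
      refine h.congr_deriv ?_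
      simp only [id_eq]
      push_cast
      ring
    have h5 := ((h2.sub_const (internalEnergy γ σ)).sub h3).sub h4
    have : F = fun y : ℝ => y ^ γ / (γ - 1) - internalEnergy γ σ -
        γ / (γ - 1) * σ ^ (γ - 1) * (y - σ) - γ * m / 2 * (y - σ) ^ 2 := by
      funext y
      simp only [hFdef, relInternalEnergy, internalEnergy]
    rw [this]
    refine h5.congr_deriv ?_
    simp only [hGdef]
    field_simp
    ring
  have hσpos : 0 < σ := lt_of_lt_of_le ha hσ.1
  have hFσ : F σ = 0 := by simp [hFdef, relSelf]
  have key : 0 ≤ F ρ := by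
    rcases le_total σ ρ with h | h
    · have hmonoF : MonotoneOn F (Set.Icc σ R) := by
        apply monotoneOn_of_hasDerivWithinAt_nonneg (convex_Icc σ R)
          (f' := fun x => G x - G σ)
        · intro x hx
          exact (hF x (ne_of_gt (lt_of_lt_of_le hσpos hx.1))).continuousAt.continuousWithinAt
        · intro x hx; rw [interior_Icc] at hx
          exact (hF x (ne_of_gt (lt_of_lt_of_le hσpos hx.1.le))).hasDerivWithinAt
        · intro x hx; rw [interior_Icc] at hx
          have : G σ ≤ G x := hGmono hσ ⟨hσ.1.trans hx.1.le, hx.2.le⟩ hx.1.le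
          linarith
      have h0 : F σ ≤ F ρ := hmonoF ⟨le_refl σ, hσ.2⟩ ⟨h, hρ.2⟩ h
      rw [hFσ] at h0; exact h0
    · have hantiF : AntitoneOn F (Set.Icc a σ) := by
        apply antitoneOn_of_hasDerivWithinAt_nonpos (convex_Icc a σ)
          (f' := fun x => G x - G σ)
        · intro x hx
          exact (hF x (ne_of_gt (lt_of_lt_of_le ha hx.1))).continuousAt.continuousWithinAt
        · intro x hx; rw [interior_Icc] at hx
          exact (hF x (ne_of_gt (lt_of_lt_of_le ha hx.1.le))).hasDerivWithinAt
        · intro x hx; rw [interior_Icc] at hx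
          have : G x ≤ G σ := hGmono ⟨hx.1.le, hx.2.le.trans hσ.2⟩ hσ hx.2.le
          linarith
      have h0 : F σ ≤ F ρ := hantiF ⟨hρ.1, h⟩ ⟨hσ.1, le_refl σ⟩ h
      rw [hFσ] at h0; exact h0
  simp only [hFdef] at key
  linarith


/-- Lower bound for small `ρ`. -/
lemma key_small (γ δ : ℝ) (hγ : 1 < γ) (hδ : 0 < δ) {ρ σ : ℝ} (hρ0 : 0 ≤ ρ)
    (hρ : ρ ≤ (γ - 1) / (2 * γ) * δ) (hσ : δ ≤ σ) :
    δ ^ γ / 2 ≤ relInternalEnergy γ ρ σ := by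
  have hγ1 : (0:ℝ) < γ - 1 := by linarith
  have hγ0 : (0:ℝ) < γ := by linarith
  have hσpos : 0 < σ := lt_of_lt_of_le hδ hσ
  have hrel : (γ - 1) * relInternalEnergy γ ρ σ = ρ ^ γ - σ ^ γ - γ * σ ^ (γ - 1) * (ρ - σ) := by
    simp only [relInternalEnergy, internalEnergy]
    field_simp
  have h1 : 0 ≤ ρ ^ γ := Real.rpow_nonneg hρ0 γ
  have h2 : σ ^ (γ - 1) * σ = σ ^ γ := by
    rw [← Real.rpow_add_one (ne_of_gt hσpos) (γ - 1)]
    congr 1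
    ring
  have h3 : (0:ℝ) < σ ^ (γ - 1) := Real.rpow_pos_of_pos hσpos _
  have h4 : δ ^ γ ≤ σ ^ γ := Real.rpow_le_rpow hδ.le hσ hγ0.le
  have h5' : ρ ≤ (γ - 1) / (2 * γ) * σ := by
    refine hρ.trans ?_
    apply mul_le_mul_of_nonneg_left hσ
    positivity
  have h6 : γ * σ ^ (γ - 1) * (σ - (γ - 1) / (2 * γ) * σ) ≤ γ * σ ^ (γ - 1) * (σ - ρ) := by
    apply mul_le_mul_of_nonneg_left (by linarith) (by positivity)
  have h7 : γ * σ ^ (γ - 1) * (σ - (γ - 1) / (2 * γ) * σ) = (γ - (γ - 1) / 2) * σ ^ γ := by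
    rw [← h2]
    field_simp
  have h8 : (γ - 1) / 2 * σ ^ γ ≤ (γ - 1) * relInternalEnergy γ ρ σ := by
    rw [hrel]
    linarith [h6, h7, h1]
  have h9 : (γ - 1) * (δ ^ γ / 2) ≤ (γ - 1) * relInternalEnergy γ ρ σ := by
    nlinarith [h8, mul_nonneg hγ1.le (sub_nonneg.2 h4)]
  exact le_of_mul_le_mul_left h9 hγ1

lemma exists_R (γ M : ℝ) (hγ : 1 < γ) (hM : 0 < M) :
    ∃ R : ℝ, M + 1 ≤ R ∧ ∀ ρ : ℝ, R ≤ ρ → M ^ γ + γ * M ^ (γ - 1) * ρ ≤ ρ ^ γ / 2 := by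
  have h1 : Tendsto (fun ρ : ℝ => ρ ^ (γ - 1)) atTop atTop := tendsto_rpow_atTop (by linarith)
  have h2 : Tendsto (fun ρ : ℝ => ρ ^ (γ - 1) / 2 + -(γ * M ^ (γ - 1))) atTop atTop :=
    tendsto_atTop_add_const_right _ _ (h1.atTop_div_const two_pos)
  have h3 : Tendsto (fun ρ : ℝ => ρ * (ρ ^ (γ - 1) / 2 + -(γ * M ^ (γ - 1))) + -(M ^ γ))
      atTop atTop :=
    tendsto_atTop_add_const_right _ _ (tendsto_id.atTop_mul_atTop₀ h2)
  have h4 := (h3.eventually_ge_atTop 0).and (eventually_ge_atTop (max (M + 1) 1))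
  rw [eventually_atTop] at h4
  obtain ⟨R₀, hR₀⟩ := h4
  refine ⟨max R₀ (max (M + 1) 1), le_trans (le_max_left _ _) (le_max_right _ _), ?_⟩
  intro ρ hρ
  obtain ⟨hA, hB⟩ := hR₀ ρ (le_trans (le_max_left _ _) hρ)
  have hρ1 : (1:ℝ) ≤ ρ := le_trans (le_max_right _ _) hB
  have hρpos : (0:ℝ) < ρ := by linarith
  have hpow : ρ ^ (γ - 1) * ρ = ρ ^ γ := by
    rw [← Real.rpow_add_one (ne_of_gt hρpos) (γ - 1)]
    congr 1
    ring
  nlinarith [hA, hpow]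

/-- Lower bounds on the relative internal energy: quadratic for bounded densities,
of order γ for large densities. -/
theorem relInternalEnergy_lower_bounds (γ δ M : ℝ) (hγ : 1 < γ) (hδ : 0 < δ) (hδM : δ ≤ M) :
    ∃ (R C₁ C₂ : ℝ), M + 1 ≤ R ∧ 0 < C₁ ∧ 0 < C₂ ∧
      ∀ ρ σ : ℝ, 0 ≤ ρ → σ ∈ Set.Icc δ M →
        (ρ ∈ Set.Icc 0 R → C₁ * |ρ - σ| ^ 2 ≤ relInternalEnergy γ ρ σ) ∧
        (R < ρ → C₂ * |ρ - σ| ^ γ ≤ relInternalEnergy γ ρ σ) := by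
  have hγ0 : (0:ℝ) < γ := by linarith
  have hγ1 : (0:ℝ) < γ - 1 := by linarith
  have hM : 0 < M := lt_of_lt_of_le hδ hδM
  obtain ⟨R, hR1, hR2⟩ := exists_R γ M hγ hM
  have hε0 : 0 < (γ - 1) / (2 * γ) := by positivity
  have hε1 : (γ - 1) / (2 * γ) < 1 := by
    rw [div_lt_one (by positivity)]
    linarith
  have ha0 : 0 < (γ - 1) / (2 * γ) * δ := mul_pos hε0 hδ
  have haδ : (γ - 1) / (2 * γ) * δ ≤ δ := by nlinarith
  have hδR : δ ≤ R := by linarith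
  have hR0 : 0 < R := by linarith
  set a : ℝ := (γ - 1) / (2 * γ) * δ with ha
  set m : ℝ := min (a ^ (γ - 2)) (R ^ (γ - 2)) with hm
  have hm0 : 0 < m := lt_min (Real.rpow_pos_of_pos ha0 _) (Real.rpow_pos_of_pos hR0 _)
  have hmx : ∀ x ∈ Set.Icc a R, m ≤ x ^ (γ - 2) := by
    intro x hx
    have hx0 : 0 < x := lt_of_lt_of_le ha0 hx.1
    rcases le_total γ 2 with h | h
    · exact le_trans (min_le_right _ _) (Real.rpow_le_rpow_of_nonpos hx0 hx.2 (by linarith))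
    · exact le_trans (min_le_left _ _) (Real.rpow_le_rpow ha0.le hx.1 (by linarith))
  refine ⟨R, min (γ * m / 2) (δ ^ γ / (2 * M ^ 2)), 1 / (2 * (γ - 1)), hR1,
    lt_min (by positivity) (by positivity), by positivity, ?_⟩
  intro ρ σ hρ0 hσ
  have hσpos : 0 < σ := lt_of_lt_of_le hδ hσ.1
  constructor
  · intro hρR
    rw [sq_abs]
    rcases le_total a ρ with h | h
    · calc min (γ * m / 2) (δ ^ γ / (2 * M ^ 2)) * (ρ - σ) ^ 2
          ≤ γ * m / 2 * (ρ - σ) ^ 2 :=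
            mul_le_mul_of_nonneg_right (min_le_left _ _) (sq_nonneg _)
        _ ≤ relInternalEnergy γ ρ σ :=
            key_quad γ a R m hγ ha0 hmx ⟨h, hρR.2⟩
              ⟨haδ.trans hσ.1, hσ.2.trans (by linarith)⟩
    · have h1 : δ ^ γ / 2 ≤ relInternalEnergy γ ρ σ := key_small γ δ hγ hδ hρ0 h hσ.1
      have hρσ : ρ ≤ σ := le_trans h (le_trans haδ hσ.1)
      have h2 : (ρ - σ) ^ 2 ≤ M ^ 2 := by nlinarith [hρ0, hρσ, hσ.2]
      calc min (γ * m / 2) (δ ^ γ / (2 * M ^ 2)) * (ρ - σ) ^ 2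
          ≤ δ ^ γ / (2 * M ^ 2) * M ^ 2 := by
            apply mul_le_mul (min_le_right _ _) h2 (sq_nonneg _) (by positivity)
        _ = δ ^ γ / 2 := by field_simp
        _ ≤ relInternalEnergy γ ρ σ := h1
  · intro hρR
    have hσρ : σ ≤ ρ := by linarith [hσ.2]
    rw [abs_of_nonneg (by linarith)]
    have hA : σ ^ γ ≤ M ^ γ := Real.rpow_le_rpow hσpos.le hσ.2 hγ0.le
    have hB : σ ^ (γ - 1) ≤ M ^ (γ - 1) := Real.rpow_le_rpow hσpos.le hσ.2 (by linarith)
    have hC := hR2 ρ hρR.le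
    have hD : (ρ - σ) ^ γ ≤ ρ ^ γ := Real.rpow_le_rpow (by linarith) (by linarith) hγ0.le
    have hrel : (γ - 1) * relInternalEnergy γ ρ σ = ρ ^ γ - σ ^ γ - γ * σ ^ (γ - 1) * (ρ - σ) := by
      simp only [relInternalEnergy, internalEnergy]
      field_simp
    have hE : γ * σ ^ (γ - 1) * (ρ - σ) ≤ γ * M ^ (γ - 1) * ρ := by
      have h1 : σ ^ (γ - 1) * (ρ - σ) ≤ M ^ (γ - 1) * ρ := by
        apply mul_le_mul hB (by linarith) (by linarith)
          (Real.rpow_nonneg (by linarith) _)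
      nlinarith [mul_le_mul_of_nonneg_left h1 hγ0.le]
    have key : (ρ - σ) ^ γ / 2 ≤ (γ - 1) * relInternalEnergy γ ρ σ := by
      rw [hrel]
      linarith [hA, hC, hD, hE]
    have h9 : (γ - 1) * (1 / (2 * (γ - 1)) * (ρ - σ) ^ γ) ≤
        (γ - 1) * relInternalEnergy γ ρ σ := by
      have heq : (γ - 1) * (1 / (2 * (γ - 1)) * (ρ - σ) ^ γ) = (ρ - σ) ^ γ / 2 := by
        field_simp
      rw [heq]
      exact key
    exact le_of_mul_le_mul_left h9 hγ1
end

section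
/- Let d ≥ 1, let 0 < β < d, and set p = 2d/(d+β). There exists a constant C > 0 depending only on d and β such that for every f ∈ L^p(ℝ^d): ∫_{ℝ^d} ∫_{ℝ^d} |f(x)| |f(y)| |x − y|^{β−d} dx dy ≤ C ‖f‖_{L^p}². -/
open MeasureTheory
open Set Metric
open scoped ENNReal

lemma hls_set_bound (d : ℕ) (hd : 1 ≤ d) {β : ℝ} (hβ0 : 0 < β) (hβd : β < d) :
    ∃ CA : ℝ≥0∞, CA ≠ ∞ ∧ ∀ (x : EuclideanSpace ℝ (Fin d)) (B : Set (EuclideanSpace ℝ (Fin d))),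
      ∫⁻ y in B, ENNReal.ofReal (‖x - y‖ ^ (β - d)) ∂volume
        ≤ CA * (volume B) ^ (β / (d : ℝ)) := by
  haveI : Nontrivial (EuclideanSpace ℝ (Fin d)) := by
    apply Module.nontrivial_of_finrank_pos (R := ℝ)
    rw [finrank_euclideanSpace_fin]
    exact_mod_cast hd
  set E := EuclideanSpace ℝ (Fin d)
  have hd0 : (0:ℝ) < d := lt_trans hβ0 hβd
  set v : ℝ≥0∞ := volume (ball (0 : E) 1) with hv_def
  have hv : v ≠ ∞ := measure_ball_lt_top.ne
  set a : ℝ := (d : ℝ) - β with ha_def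
  have ha : 0 < a := by simp only [ha_def]; linarith
  have hne : β - (d:ℝ) ≠ 0 := by linarith
  have hzneg : β - (d:ℝ) < 0 := by linarith
  set e : ℝ := (β - d)⁻¹ * d with he_def
  have he : e < -1 := by
    rw [he_def, show (β - (d:ℝ))⁻¹ * d = (d:ℝ) / (β - d) by rw [div_eq_mul_inv]; ring,
      div_lt_iff_of_neg hzneg]
    linarith
  have he1 : e + 1 < 0 := by linarith
  refine ⟨1 + v * ENNReal.ofReal (-1 / (e + 1)), by finiteness, ?_⟩
  intro x B
  rcases eq_or_ne (volume B) 0 with hB0 | hB0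
  · rw [Measure.restrict_eq_zero.mpr hB0, lintegral_zero_measure]; exact zero_le
  rcases eq_or_ne (volume B) ∞ with hBt | hBt
  · rw [hBt, ENNReal.top_rpow_of_pos (by positivity), ENNReal.mul_top (by simp)]
    exact le_top
  set b := volume B with hb_def
  set bt := b.toReal with hbt_def
  have hbt : 0 < bt := ENNReal.toReal_pos hB0 hBt
  set t0 : ℝ := bt ^ (-(a / (d:ℝ))) with ht0_def
  have ht0 : 0 < t0 := Real.rpow_pos_of_pos hbt _
  have hmeas : Measurable fun y : E => ‖x - y‖ ^ (β - (d:ℝ)) := by fun_prop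
  have lc := lintegral_eq_lintegral_meas_lt (volume.restrict B)
      (Filter.Eventually.of_forall fun y => Real.rpow_nonneg (norm_nonneg _) _)
      hmeas.aemeasurable
  rw [lc]
  have hsub : ∀ t : ℝ, 0 < t →
      {y : E | t < ‖x - y‖ ^ (β - (d:ℝ))} ⊆ ball x (t ^ (β - (d:ℝ))⁻¹) := by
    intro t ht y hy
    simp only [mem_setOf_eq] at hy
    have hxy : 0 < ‖x - y‖ := by
      rcases eq_or_lt_of_le (norm_nonneg (x - y)) with h | h
      · rw [← h, Real.zero_rpow hne] at hy; linarith
      · exact h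
    have h2 := (Real.lt_rpow_inv_iff_of_neg hxy ht hzneg).mpr hy
    rw [mem_ball, dist_comm, dist_eq_norm]
    exact h2
  have hball : ∀ t : ℝ, 0 < t →
      volume (ball x (t ^ (β - (d:ℝ))⁻¹)) = ENNReal.ofReal (t ^ e) * v := by
    intro t ht
    rw [Measure.addHaar_ball volume x (Real.rpow_nonneg ht.le _), finrank_euclideanSpace_fin]
    congr 2
    rw [← Real.rpow_natCast (t ^ (β - (d:ℝ))⁻¹) d, ← Real.rpow_mul ht.le]
  have hsplit : (Ioi (0:ℝ)) = Ioc 0 t0 ∪ Ioi t0 := (Ioc_union_Ioi_eq_Ioi ht0.le).symm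
  rw [hsplit, lintegral_union measurableSet_Ioi Set.Ioc_disjoint_Ioi_same]
  have hpart1 : ∫⁻ t in Ioc (0:ℝ) t0, (volume.restrict B) {y : E | t < ‖x - y‖ ^ (β - (d:ℝ))}
      ≤ b * ENNReal.ofReal t0 := by
    calc ∫⁻ t in Ioc (0:ℝ) t0, (volume.restrict B) {y : E | t < ‖x - y‖ ^ (β - (d:ℝ))}
        ≤ ∫⁻ _ in Ioc (0:ℝ) t0, b := by
          apply lintegral_mono
          intro t
          rw [hb_def]
          exact le_trans (measure_mono (subset_univ _)) (Measure.restrict_apply_univ _).le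
      _ = b * ENNReal.ofReal t0 := by
          rw [setLIntegral_const, Real.volume_Ioc, sub_zero]
  have hpart2 : ∫⁻ t in Ioi t0, (volume.restrict B) {y : E | t < ‖x - y‖ ^ (β - (d:ℝ))}
      ≤ ENNReal.ofReal (-t0 ^ (e+1) / (e+1)) * v := by
    calc ∫⁻ t in Ioi t0, (volume.restrict B) {y : E | t < ‖x - y‖ ^ (β - (d:ℝ))}
        ≤ ∫⁻ t in Ioi t0, ENNReal.ofReal (t ^ e) * v := by
          apply lintegral_mono_ae
          filter_upwards [ae_restrict_mem measurableSet_Ioi] with t ht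
          have htpos : 0 < t := lt_trans ht0 ht
          calc (volume.restrict B) {y : E | t < ‖x - y‖ ^ (β - (d:ℝ))}
              ≤ volume {y : E | t < ‖x - y‖ ^ (β - (d:ℝ))} := Measure.restrict_apply_le _ _
            _ ≤ volume (ball x (t ^ (β - (d:ℝ))⁻¹)) := measure_mono (hsub t htpos)
            _ = ENNReal.ofReal (t ^ e) * v := hball t htpos
      _ = (∫⁻ t in Ioi t0, ENNReal.ofReal (t ^ e)) * v := lintegral_mul_const' v _ hv
      _ = ENNReal.ofReal (-t0 ^ (e+1) / (e+1)) * v := by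
          rw [← ofReal_integral_eq_lintegral_ofReal (integrableOn_Ioi_rpow_of_lt he ht0)]
          · rw [integral_Ioi_rpow_of_lt he ht0]
          · filter_upwards [ae_restrict_mem measurableSet_Ioi] with t ht
            exact Real.rpow_nonneg (lt_trans ht0 ht).le _
  calc _ ≤ b * ENNReal.ofReal t0 + ENNReal.ofReal (-t0 ^ (e+1) / (e+1)) * v :=
        add_le_add hpart1 hpart2
    _ = (1 + v * ENNReal.ofReal (-1 / (e + 1))) * b ^ (β / (d:ℝ)) := by
        have hb_eq : b = ENNReal.ofReal bt := (ENNReal.ofReal_toReal hBt).symm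
        have hbq : b ^ (β / (d:ℝ)) = ENNReal.ofReal (bt ^ (β / (d:ℝ))) := by
          rw [hb_eq, ENNReal.ofReal_rpow_of_pos hbt]
        have h1 : b * ENNReal.ofReal t0 = ENNReal.ofReal (bt ^ (β / (d:ℝ))) := by
          rw [hb_eq, ht0_def, ← ENNReal.ofReal_mul hbt.le]
          congr 1
          rw [show bt * bt ^ (-(a / (d:ℝ))) = bt ^ (1:ℝ) * bt ^ (-(a / (d:ℝ))) by
                rw [Real.rpow_one],
            ← Real.rpow_add hbt]
          congr 1
          rw [ha_def]; field_simp; ring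
        have hexp : (-(a / (d:ℝ))) * (e + 1) = β / d := by
          rw [ha_def, he_def]
          field_simp
          ring
        have h2 : -t0 ^ (e+1) / (e+1) = bt ^ (β / (d:ℝ)) * (-1 / (e+1)) := by
          rw [ht0_def, ← Real.rpow_mul hbt.le, hexp]
          ring
        rw [h1, h2, ENNReal.ofReal_mul (Real.rpow_nonneg hbt.le _), hbq]
        ring

lemma lint_Ioc_rpow {σ s : ℝ} (hs : 0 < s) (hσ0 : 0 < σ) (hσ1 : σ < 1) :
    ∫⁻ t in Ioc (0:ℝ) s, ENNReal.ofReal (t ^ (-σ)) ∂volume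
      = ENNReal.ofReal (s ^ (1 - σ) / (1 - σ)) := by
  have hint : IntegrableOn (fun t : ℝ => t ^ (-σ)) (Ioc 0 s) volume := by
    have h := intervalIntegral.intervalIntegrable_rpow' (a := 0) (b := s) (r := -σ) (by linarith)
    rwa [intervalIntegrable_iff_integrableOn_Ioc_of_le hs.le] at h
  rw [← ofReal_integral_eq_lintegral_ofReal hint]
  · congr 1
    rw [← intervalIntegral.integral_of_le hs.le,
      integral_rpow (Or.inl (by linarith : (-1:ℝ) < -σ))]
    rw [Real.zero_rpow (by linarith : -σ + 1 ≠ 0)]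
    norm_num
    rw [show -σ + 1 = 1 - σ by ring]
  · filter_upwards [ae_restrict_mem measurableSet_Ioc] with t ht
    exact Real.rpow_nonneg ht.1.le _

lemma hls_main (d : ℕ) (hd : 1 ≤ d) {β : ℝ} (hβ0 : 0 < β) (hβd : β < d) :
    ∃ C : ℝ≥0∞, C ≠ ∞ ∧ ∀ G : EuclideanSpace ℝ (Fin d) → ℝ, Measurable G → (∀ x, 0 ≤ G x) →
      (∫⁻ x, ENNReal.ofReal (G x) ^ (2 * d / ((d : ℝ) + β)) ∂volume) ≤ 1 →
      ∫⁻ x, ∫⁻ y, ENNReal.ofReal (G x) * ENNReal.ofReal (G y)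
          * ENNReal.ofReal (‖x - y‖ ^ (β - d)) ∂volume ∂volume ≤ C := by
  classical
  set E := EuclideanSpace ℝ (Fin d)
  obtain ⟨CA, hCAtop, hA⟩ := hls_set_bound d hd hβ0 hβd
  have hd0 : (0:ℝ) < d := lt_trans hβ0 hβd
  have hdb : (0:ℝ) < d + β := by linarith
  set pr : ℝ := 2 * d / ((d : ℝ) + β) with hpr_def
  have hpr1 : 1 < pr := by
    rw [hpr_def, lt_div_iff₀ hdb]; linarith
  have hpr2 : pr < 2 := by
    rw [hpr_def, div_lt_iff₀ hdb]; linarith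
  have hpr0 : 0 < pr := lt_trans one_pos hpr1
  set q : ℝ := β / d with hq_def
  have hq0 : 0 < q := by positivity
  set σ : ℝ := 2 - pr with hσ_def
  have hσ0 : 0 < σ := by linarith
  have hσ1 : σ < 1 := by linarith
  have hprq : pr * q = σ := by
    rw [hσ_def, hq_def, hpr_def]; field_simp; ring
  set c2 : ℝ≥0∞ := ENNReal.ofReal ((pr - 1)⁻¹) with hc2_def
  refine ⟨CA * c2 * ENNReal.ofReal pr⁻¹ * 2, by finiteness, ?_⟩
  intro G hGm hGnn hG1
  set μ : ℝ → ℝ≥0∞ := fun s => volume {x : E | s < G x} with hμ_def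
  have hμm : Measurable μ := by
    apply Antitone.measurable
    intro s s' hss'
    exact measure_mono fun x hx => lt_of_le_of_lt hss' hx
  have hBmeas : ∀ s : ℝ, MeasurableSet {x : E | s < G x} :=
    fun s => measurableSet_lt measurable_const hGm
  -- Chebyshev
  have hcheb : ∀ s : ℝ, 0 < s → μ s ≤ ENNReal.ofReal (s ^ (-pr)) := by
    intro s hs
    have h1 : {x : E | s < G x} ⊆
        {x : E | ENNReal.ofReal s ^ pr ≤ ENNReal.ofReal (G x) ^ pr} := by
      intro x hx
      exact ENNReal.rpow_le_rpow (ENNReal.ofReal_le_ofReal (le_of_lt hx)) hpr0.le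
    have h2 := mul_meas_ge_le_lintegral₀ (μ := (volume : Measure E))
      (f := fun x : E => ENNReal.ofReal (G x) ^ pr)
      ((hGm.ennreal_ofReal.pow_const pr).aemeasurable) (ENNReal.ofReal s ^ pr)
    have h3 : ENNReal.ofReal s ^ pr * μ s ≤ 1 := by
      refine le_trans (le_trans ?_ h2) hG1
      exact mul_le_mul_right (measure_mono h1) _
    have h4 : μ s ≤ (ENNReal.ofReal s ^ pr)⁻¹ := by
      rw [ENNReal.le_inv_iff_mul_le, mul_comm]; exact h3
    calc μ s ≤ (ENNReal.ofReal s ^ pr)⁻¹ := h4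
      _ = ENNReal.ofReal s ^ (-pr) := by
          rw [← ENNReal.rpow_neg]
      _ = ENNReal.ofReal (s ^ (-pr)) := ENNReal.ofReal_rpow_of_pos hs
  -- kernel
  set k : E → E → ℝ≥0∞ := fun x y => ENNReal.ofReal (‖x - y‖ ^ (β - d)) with hk_def
  have hkm : Measurable fun p : E × E => k p.1 p.2 := by
    simp only [hk_def]; fun_prop
  set W : E → ℝ≥0∞ := fun x => ∫⁻ y, ENNReal.ofReal (G y) * k x y ∂volume with hW_def
  have hWm : Measurable W := by
    apply Measurable.lintegral_prod_right' (f := fun p : E × E => ENNReal.ofReal (G p.2) * k p.1 p.2)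
    simp only [hk_def]; fun_prop
  -- Step 0/1: layer cake in x
  have step0 : ∫⁻ x, ∫⁻ y, ENNReal.ofReal (G x) * ENNReal.ofReal (G y) * k x y ∂volume ∂volume
      = ∫⁻ s in Ioi (0:ℝ), ∫⁻ x in {x : E | s < G x}, W x ∂volume ∂volume := by
    have h0 : ∫⁻ x, ∫⁻ y, ENNReal.ofReal (G x) * ENNReal.ofReal (G y) * k x y ∂volume ∂volume
        = ∫⁻ x, ENNReal.ofReal (G x) * W x ∂volume := by
      apply lintegral_congr
      intro x
      simp_rw [mul_assoc]
      exact lintegral_const_mul' _ _ ENNReal.ofReal_ne_top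
    have h1 : ∫⁻ x, ENNReal.ofReal (G x) * W x ∂volume
        = ∫⁻ x, ENNReal.ofReal (G x) ∂(volume.withDensity W) := by
      rw [lintegral_withDensity_eq_lintegral_mul volume hWm (by fun_prop)]
      apply lintegral_congr
      intro x
      exact (mul_comm _ _)
    rw [h0, h1, lintegral_eq_lintegral_meas_lt _ (ae_of_all _ hGnn) hGm.aemeasurable]
    apply lintegral_congr
    intro s
    exact withDensity_apply W (hBmeas s)
  -- Step 2: layer cake in y
  have step2 : ∀ x : E, W x = ∫⁻ t in Ioi (0:ℝ), ∫⁻ y in {y : E | t < G y}, k x y ∂volume ∂volume := by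
    intro x
    have hkx : Measurable (k x) := by simp only [hk_def]; fun_prop
    have h1 : W x = ∫⁻ y, ENNReal.ofReal (G y) ∂(volume.withDensity (k x)) := by
      rw [lintegral_withDensity_eq_lintegral_mul volume hkx (by fun_prop)]
      apply lintegral_congr
      intro y
      exact (mul_comm _ _)
    rw [h1, lintegral_eq_lintegral_meas_lt _ (ae_of_all _ hGnn) hGm.aemeasurable]
    apply lintegral_congr
    intro t
    exact withDensity_apply (k x) (hBmeas t)
  -- measurability of U
  have hUm : Measurable fun p : E × ℝ => ∫⁻ y in {y : E | p.2 < G y}, k p.1 y ∂volume := by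
    have h1 : (fun p : E × ℝ => ∫⁻ y in {y : E | p.2 < G y}, k p.1 y ∂volume)
        = fun p : E × ℝ => ∫⁻ y, {q : (E × ℝ) × E | q.1.2 < G q.2}.indicator
            (fun q => k q.1.1 q.2) (p, y) ∂volume := by
      funext p
      rw [← lintegral_indicator (hBmeas p.2)]
      apply lintegral_congr
      intro y
      simp [Set.indicator_apply]
    rw [h1]
    apply Measurable.lintegral_prod_right'
    apply Measurable.indicator
    · simp only [hk_def]; fun_prop
    · exact measurableSet_lt (by fun_prop) (hGm.comp measurable_snd)
  -- Step 3: swap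
  have step3 : ∀ s : ℝ, ∫⁻ x in {x : E | s < G x}, W x ∂volume
      = ∫⁻ t in Ioi (0:ℝ), ∫⁻ x in {x : E | s < G x},
          (∫⁻ y in {y : E | t < G y}, k x y ∂volume) ∂volume ∂volume := by
    intro s
    have h1 : ∫⁻ x in {x : E | s < G x}, W x ∂volume
        = ∫⁻ x in {x : E | s < G x}, ∫⁻ t in Ioi (0:ℝ),
            (∫⁻ y in {y : E | t < G y}, k x y ∂volume) ∂volume ∂volume := by
      apply lintegral_congr
      intro x
      exact step2 x
    rw [h1]
    exact lintegral_lintegral_swap (hUm.aemeasurable)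
  -- key layer cake bound
  have key : ∫⁻ s in Ioi (0:ℝ), μ s * ENNReal.ofReal (s ^ (pr - 1)) ∂volume
      ≤ ENNReal.ofReal pr⁻¹ := by
    have lck := lintegral_comp_eq_lintegral_meas_lt_mul (volume : Measure E)
      (ae_of_all _ hGnn) hGm.aemeasurable
      (g := fun t => t ^ (pr - 1))
      (fun t _ => intervalIntegral.intervalIntegrable_rpow' (by linarith))
      (by filter_upwards [ae_restrict_mem measurableSet_Ioi] with t ht
          exact Real.rpow_nonneg (le_of_lt ht) _)
    simp only [hμ_def]
    rw [← lck]
    calc ∫⁻ ω, ENNReal.ofReal (∫ t in (0:ℝ)..G ω, t ^ (pr-1)) ∂volume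
        = ∫⁻ ω, ENNReal.ofReal (G ω ^ pr) * ENNReal.ofReal pr⁻¹ ∂volume := by
          apply lintegral_congr; intro ω
          rw [integral_rpow (Or.inl (by linarith : (-1:ℝ) < pr - 1)),
            Real.zero_rpow (by linarith : pr - 1 + 1 ≠ 0), show pr - 1 + 1 = pr by ring,
            sub_zero, div_eq_mul_inv, ENNReal.ofReal_mul (Real.rpow_nonneg (hGnn ω) _)]
      _ = (∫⁻ ω, ENNReal.ofReal (G ω ^ pr) ∂volume) * ENNReal.ofReal pr⁻¹ :=
          lintegral_mul_const' _ _ ENNReal.ofReal_ne_top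
      _ ≤ 1 * ENNReal.ofReal pr⁻¹ := by
          apply mul_le_mul_left
          calc ∫⁻ ω, ENNReal.ofReal (G ω ^ pr) ∂volume
              = ∫⁻ ω, ENNReal.ofReal (G ω) ^ pr ∂volume := by
                apply lintegral_congr; intro ω
                rw [ENNReal.ofReal_rpow_of_nonneg (hGnn ω) hpr0.le]
            _ ≤ 1 := hG1
      _ = ENNReal.ofReal pr⁻¹ := one_mul _
  -- bound of the inner one-dimensional integral
  have hIoc : ∀ s : ℝ, 0 < s → ∫⁻ t in Ioc (0:ℝ) s, μ t ^ q ∂volume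
      ≤ ENNReal.ofReal (s ^ (pr - 1)) * c2 := by
    intro s hs
    calc ∫⁻ t in Ioc (0:ℝ) s, μ t ^ q ∂volume
        ≤ ∫⁻ t in Ioc (0:ℝ) s, ENNReal.ofReal (t ^ (-σ)) ∂volume := by
          apply lintegral_mono_ae
          filter_upwards [ae_restrict_mem measurableSet_Ioc] with t ht
          calc μ t ^ q ≤ (ENNReal.ofReal (t ^ (-pr))) ^ q :=
                ENNReal.rpow_le_rpow (hcheb t ht.1) hq0.le
            _ = ENNReal.ofReal ((t ^ (-pr)) ^ q) :=
                ENNReal.ofReal_rpow_of_pos (Real.rpow_pos_of_pos ht.1 _)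
            _ = ENNReal.ofReal (t ^ (-σ)) := by
                rw [← Real.rpow_mul ht.1.le, show -pr * q = -σ by rw [← hprq]; ring]
      _ = ENNReal.ofReal (s ^ (1 - σ) / (1 - σ)) := lint_Ioc_rpow hs hσ0 hσ1
      _ = ENNReal.ofReal (s ^ (pr - 1)) * c2 := by
          rw [show (1:ℝ) - σ = pr - 1 by rw [hσ_def]; ring, div_eq_mul_inv, hc2_def,
            ENNReal.ofReal_mul (Real.rpow_nonneg hs.le _)]
  -- the two half-plane pieces
  set ψ1 : ℝ → ℝ → ℝ≥0∞ := fun s t => if t ≤ s then μ s * (CA * μ t ^ q) else 0 with hψ1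
  set ψ2 : ℝ → ℝ → ℝ≥0∞ := fun s t => if t ≤ s then 0 else μ t * (CA * μ s ^ q) with hψ2
  have hψ1m : Measurable fun p : ℝ × ℝ => ψ1 p.1 p.2 := by
    apply Measurable.ite (measurableSet_le measurable_snd measurable_fst)
    · exact (hμm.comp measurable_fst).mul (((hμm.comp measurable_snd).pow_const q).const_mul CA)
    · exact measurable_const
  have hψ2m : Measurable fun p : ℝ × ℝ => ψ2 p.1 p.2 := by
    apply Measurable.ite (measurableSet_le measurable_snd measurable_fst)
    · exact measurable_const
    · exact (hμm.comp measurable_snd).mul (((hμm.comp measurable_fst).pow_const q).const_mul CA)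
  have hP1 : (∫⁻ s in Ioi (0:ℝ), ∫⁻ t in Ioi (0:ℝ), ψ1 s t ∂volume ∂volume)
      ≤ CA * c2 * ENNReal.ofReal pr⁻¹ := by
    have hinner : ∀ s : ℝ, 0 < s → ∫⁻ t in Ioi (0:ℝ), ψ1 s t ∂volume
        ≤ CA * c2 * (μ s * ENNReal.ofReal (s ^ (pr-1))) := by
      intro s hs
      have h1 : ∀ t : ℝ, ψ1 s t = (Iic s).indicator (fun t => μ s * (CA * μ t ^ q)) t := by
        intro t
        simp [hψ1, Set.indicator_apply, Set.mem_Iic]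
      calc ∫⁻ t in Ioi (0:ℝ), ψ1 s t ∂volume
          = ∫⁻ t in Ioc (0:ℝ) s, μ s * (CA * μ t ^ q) ∂volume := by
            rw [lintegral_congr h1, lintegral_indicator measurableSet_Iic,
              Measure.restrict_restrict measurableSet_Iic, inter_comm, Ioi_inter_Iic]
        _ = μ s * (CA * ∫⁻ t in Ioc (0:ℝ) s, μ t ^ q ∂volume) := by
            rw [lintegral_const_mul _ ((hμm.pow_const q).const_mul CA),
              lintegral_const_mul _ (hμm.pow_const q)]
        _ ≤ μ s * (CA * (ENNReal.ofReal (s ^ (pr-1)) * c2)) := by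
            gcongr
            exact hIoc s hs
        _ = CA * c2 * (μ s * ENNReal.ofReal (s ^ (pr-1))) := by ring
    calc (∫⁻ s in Ioi (0:ℝ), ∫⁻ t in Ioi (0:ℝ), ψ1 s t ∂volume ∂volume)
        ≤ ∫⁻ s in Ioi (0:ℝ), CA * c2 * (μ s * ENNReal.ofReal (s ^ (pr-1))) ∂volume := by
          apply lintegral_mono_ae
          filter_upwards [ae_restrict_mem measurableSet_Ioi] with s hs
          exact hinner s hs
      _ = CA * c2 * ∫⁻ s in Ioi (0:ℝ), μ s * ENNReal.ofReal (s ^ (pr-1)) ∂volume :=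
          lintegral_const_mul' _ _ (ENNReal.mul_ne_top hCAtop ENNReal.ofReal_ne_top)
      _ ≤ CA * c2 * ENNReal.ofReal pr⁻¹ := mul_le_mul_right key _
  have hP2 : (∫⁻ s in Ioi (0:ℝ), ∫⁻ t in Ioi (0:ℝ), ψ2 s t ∂volume ∂volume)
      ≤ CA * c2 * ENNReal.ofReal pr⁻¹ := by
    rw [lintegral_lintegral_swap hψ2m.aemeasurable]
    have hinner : ∀ t : ℝ, 0 < t → ∫⁻ s in Ioi (0:ℝ), ψ2 s t ∂volume
        ≤ CA * c2 * (μ t * ENNReal.ofReal (t ^ (pr-1))) := by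
      intro t ht
      have h1 : ∀ s : ℝ, ψ2 s t = (Iio t).indicator (fun s => μ t * (CA * μ s ^ q)) s := by
        intro s
        by_cases h : t ≤ s
        · simp [hψ2, Set.indicator_apply, h, not_lt.mpr h]
        · simp [hψ2, Set.indicator_apply, h, not_le.mp h]
      calc ∫⁻ s in Ioi (0:ℝ), ψ2 s t ∂volume
          = ∫⁻ s in Ioo (0:ℝ) t, μ t * (CA * μ s ^ q) ∂volume := by
            rw [lintegral_congr h1, lintegral_indicator measurableSet_Iio,
              Measure.restrict_restrict measurableSet_Iio, inter_comm, Ioi_inter_Iio]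
        _ = μ t * (CA * ∫⁻ s in Ioo (0:ℝ) t, μ s ^ q ∂volume) := by
            rw [lintegral_const_mul _ ((hμm.pow_const q).const_mul CA),
              lintegral_const_mul _ (hμm.pow_const q)]
        _ ≤ μ t * (CA * ∫⁻ s in Ioc (0:ℝ) t, μ s ^ q ∂volume) := by
            gcongr
            exact Ioo_subset_Ioc_self
        _ ≤ μ t * (CA * (ENNReal.ofReal (t ^ (pr-1)) * c2)) := by
            gcongr
            exact hIoc t ht
        _ = CA * c2 * (μ t * ENNReal.ofReal (t ^ (pr-1))) := by ring
    calc (∫⁻ t in Ioi (0:ℝ), ∫⁻ s in Ioi (0:ℝ), ψ2 s t ∂volume ∂volume)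
        ≤ ∫⁻ t in Ioi (0:ℝ), CA * c2 * (μ t * ENNReal.ofReal (t ^ (pr-1))) ∂volume := by
          apply lintegral_mono_ae
          filter_upwards [ae_restrict_mem measurableSet_Ioi] with t ht
          exact hinner t ht
      _ = CA * c2 * ∫⁻ t in Ioi (0:ℝ), μ t * ENNReal.ofReal (t ^ (pr-1)) ∂volume :=
          lintegral_const_mul' _ _ (ENNReal.mul_ne_top hCAtop ENNReal.ofReal_ne_top)
      _ ≤ CA * c2 * ENNReal.ofReal pr⁻¹ := mul_le_mul_right key _
  -- V bounds
  have hV1 : ∀ s t : ℝ,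
      (∫⁻ x in {x : E | s < G x}, ∫⁻ y in {y : E | t < G y}, k x y ∂volume ∂volume)
        ≤ μ s * (CA * μ t ^ q) := by
    intro s t
    calc (∫⁻ x in {x : E | s < G x}, ∫⁻ y in {y : E | t < G y}, k x y ∂volume ∂volume)
        ≤ ∫⁻ _ in {x : E | s < G x}, CA * volume {y : E | t < G y} ^ q ∂volume :=
          lintegral_mono fun x => hA x _
      _ = CA * μ t ^ q * μ s := setLIntegral_const _ _
      _ = μ s * (CA * μ t ^ q) := by ring
  have hV2 : ∀ s t : ℝ,
      (∫⁻ x in {x : E | s < G x}, ∫⁻ y in {y : E | t < G y}, k x y ∂volume ∂volume)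
        ≤ μ t * (CA * μ s ^ q) := by
    intro s t
    have hswap : (∫⁻ x in {x : E | s < G x}, ∫⁻ y in {y : E | t < G y}, k x y ∂volume ∂volume)
        = ∫⁻ y in {y : E | t < G y}, ∫⁻ x in {x : E | s < G x}, k x y ∂volume ∂volume :=
      lintegral_lintegral_swap hkm.aemeasurable
    rw [hswap]
    calc (∫⁻ y in {y : E | t < G y}, ∫⁻ x in {x : E | s < G x}, k x y ∂volume ∂volume)
        ≤ ∫⁻ _ in {y : E | t < G y}, CA * volume {x : E | s < G x} ^ q ∂volume := by
          apply lintegral_mono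
          intro y
          show (∫⁻ x in {x : E | s < G x}, k x y ∂volume) ≤ CA * volume {x : E | s < G x} ^ q
          have h1 : ∫⁻ x in {x : E | s < G x}, k x y ∂volume
              = ∫⁻ x in {x : E | s < G x}, ENNReal.ofReal (‖y - x‖ ^ (β - d)) ∂volume := by
            apply lintegral_congr
            intro x
            rw [hk_def]
            simp only [norm_sub_rev x y]
          rw [h1]
          exact hA y _
      _ = CA * μ s ^ q * μ t := setLIntegral_const _ _
      _ = μ t * (CA * μ s ^ q) := by ring
  -- put everything together
  rw [step0]
  calc ∫⁻ s in Ioi (0:ℝ), ∫⁻ x in {x : E | s < G x}, W x ∂volume ∂volume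
      = ∫⁻ s in Ioi (0:ℝ), ∫⁻ t in Ioi (0:ℝ),
          (∫⁻ x in {x : E | s < G x}, ∫⁻ y in {y : E | t < G y}, k x y ∂volume ∂volume)
            ∂volume ∂volume := lintegral_congr fun s => step3 s
    _ ≤ ∫⁻ s in Ioi (0:ℝ), ∫⁻ t in Ioi (0:ℝ), (ψ1 s t + ψ2 s t) ∂volume ∂volume := by
        apply lintegral_mono
        intro s
        apply lintegral_mono
        intro t
        by_cases h : t ≤ s
        · simp only [hψ1, hψ2, if_pos h]
          rw [add_zero]
          exact hV1 s t
        · simp only [hψ1, hψ2, if_neg h]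
          rw [zero_add]
          exact hV2 s t
    _ = (∫⁻ s in Ioi (0:ℝ), ∫⁻ t in Ioi (0:ℝ), ψ1 s t ∂volume ∂volume)
        + (∫⁻ s in Ioi (0:ℝ), ∫⁻ t in Ioi (0:ℝ), ψ2 s t ∂volume ∂volume) := by
        have hinner : ∀ s : ℝ, ∫⁻ t in Ioi (0:ℝ), (ψ1 s t + ψ2 s t) ∂volume
            = (∫⁻ t in Ioi (0:ℝ), ψ1 s t ∂volume) + ∫⁻ t in Ioi (0:ℝ), ψ2 s t ∂volume :=
          fun s => lintegral_add_left (hψ1m.comp (measurable_const.prodMk measurable_id)) _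
        rw [lintegral_congr hinner]
        exact lintegral_add_left (Measurable.lintegral_prod_right' hψ1m) _
    _ ≤ CA * c2 * ENNReal.ofReal pr⁻¹ + CA * c2 * ENNReal.ofReal pr⁻¹ := add_le_add hP1 hP2
    _ = CA * c2 * ENNReal.ofReal pr⁻¹ * 2 := by ring

/-- Hardy–Littlewood–Sobolev inequality, diagonal case: for `0 < β < d` and
`p = 2d/(d+β)`, the double Riesz-type integral is controlled by the squared
`L^p` norm. -/
theorem hardy_littlewood_sobolev_diagonal (d : ℕ) (hd : 1 ≤ d) (β : ℝ)
    (hβ0 : 0 < β) (hβd : β < d) :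
    ∃ C : ℝ, 0 < C ∧ ∀ f : EuclideanSpace ℝ (Fin d) → ℝ,
      MemLp f (ENNReal.ofReal (2 * d / (d + β))) volume →
      ∫ x, ∫ y, |f x| * |f y| * ‖x - y‖ ^ (β - d) ∂volume ∂volume ≤
        C * (eLpNorm f (ENNReal.ofReal (2 * d / (d + β))) volume).toReal ^ 2 := by
  obtain ⟨C0, hC0top, hmain⟩ := hls_main d hd hβ0 hβd
  refine ⟨C0.toReal + 1, by positivity, ?_⟩
  intro f hf
  have hd0 : (0:ℝ) < d := lt_trans hβ0 hβd
  have hdb : (0:ℝ) < (d:ℝ) + β := by linarith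
  set pr : ℝ := 2 * d / ((d : ℝ) + β) with hpr_def
  have hpr0 : 0 < pr := by rw [hpr_def]; positivity
  set p' : ℝ≥0∞ := ENNReal.ofReal pr with hp'_def
  have hp'0 : p' ≠ 0 := by
    rw [hp'_def]
    simp only [ne_eq, ENNReal.ofReal_eq_zero, not_le]
    exact hpr0
  have hp'top : p' ≠ ∞ := ENNReal.ofReal_ne_top
  set N : ℝ≥0∞ := eLpNorm f p' volume with hN_def
  have hNtop : N ≠ ∞ := hf.2.ne
  have hfm := hf.1
  set f₀ : EuclideanSpace ℝ (Fin d) → ℝ := hfm.mk f with hf₀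
  have hf₀m : Measurable f₀ := hfm.stronglyMeasurable_mk.measurable
  have hff₀ : f =ᵐ[volume] f₀ := hfm.ae_eq_mk
  set G : EuclideanSpace ℝ (Fin d) → ℝ := fun x => |f₀ x| with hG_def
  have hGm : Measurable G := hf₀m.abs
  have hGnn : ∀ x, 0 ≤ G x := fun x => abs_nonneg _
  rcases eq_or_ne N 0 with hN0 | hN0
  · have hf0 : f =ᵐ[volume] 0 := (eLpNorm_eq_zero_iff hfm hp'0).mp hN0
    have hzero : ∀ x : EuclideanSpace ℝ (Fin d), (∫ y, |f x| * |f y| * ‖x - y‖ ^ (β - (d:ℝ)) ∂volume) = 0 := by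
      intro x
      have h : (fun y : EuclideanSpace ℝ (Fin d) => |f x| * |f y| * ‖x - y‖ ^ (β - (d:ℝ))) =ᵐ[volume]
          (fun _ => (0:ℝ)) := by
        filter_upwards [hf0] with y hy
        simp [hy]
      rw [integral_congr_ae h, integral_zero]
    simp only [hzero, hN0, integral_zero, ENNReal.toReal_zero]
    norm_num
  -- main case
  set c : ℝ := N.toReal with hc_def
  have hc0 : 0 < c := ENNReal.toReal_pos hN0 hNtop
  have os : ENNReal.ofReal c = N := by rw [hc_def, ENNReal.ofReal_toReal hNtop]
  set G' : EuclideanSpace ℝ (Fin d) → ℝ := fun x => G x * c⁻¹ with hG'_def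
  have hG'm : Measurable G' := hGm.mul_const _
  have hG'nn : ∀ x, 0 ≤ G' x := fun x => mul_nonneg (hGnn x) (inv_nonneg.mpr hc0.le)
  have hNI : N = (∫⁻ x, ENNReal.ofReal (G x) ^ pr ∂volume) ^ (1/pr) := by
    rw [hN_def, eLpNorm_congr_ae hff₀, eLpNorm_eq_lintegral_rpow_enorm_toReal hp'0 hp'top]
    rw [hp'_def, ENNReal.toReal_ofReal hpr0.le]
    congr 1
    apply lintegral_congr
    intro x
    congr 1
    rw [← ofReal_norm, Real.norm_eq_abs]
  have hIN : (∫⁻ x, ENNReal.ofReal (G x) ^ pr ∂volume) = N ^ pr := by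
    rw [hNI, ← ENNReal.rpow_mul, one_div, inv_mul_cancel₀ (ne_of_gt hpr0), ENNReal.rpow_one]
  have hG'1 : ∫⁻ x, ENNReal.ofReal (G' x) ^ pr ∂volume ≤ 1 := by
    have h : ∀ x, ENNReal.ofReal (G' x) ^ pr
        = ENNReal.ofReal (G x) ^ pr * (ENNReal.ofReal c⁻¹) ^ pr := by
      intro x
      rw [hG'_def]
      rw [show (fun x => G x * c⁻¹) x = G x * c⁻¹ from rfl,
        ENNReal.ofReal_mul (hGnn x), ENNReal.mul_rpow_of_nonneg _ _ hpr0.le]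
    rw [lintegral_congr h,
      lintegral_mul_const' _ _ (ENNReal.rpow_ne_top_of_nonneg hpr0.le ENNReal.ofReal_ne_top),
      hIN, ← ENNReal.mul_rpow_of_nonneg _ _ hpr0.le]
    have h2 : N * ENNReal.ofReal c⁻¹ = 1 := by
      rw [ENNReal.ofReal_inv_of_pos hc0, os, ENNReal.mul_inv_cancel hN0 hNtop]
    rw [h2, ENNReal.one_rpow]
  have hmain' := hmain G' hG'm hG'nn hG'1
  have hGx : ∀ x, ENNReal.ofReal (G x) = N * ENNReal.ofReal (G' x) := by
    intro x
    have h : G x = G' x * c := by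
      rw [hG'_def]
      field_simp
    rw [h, ENNReal.ofReal_mul (hG'nn x), os, mul_comm]
  have hscale : (∫⁻ x, ∫⁻ y, ENNReal.ofReal (G x) * ENNReal.ofReal (G y)
        * ENNReal.ofReal (‖x - y‖ ^ (β - (d:ℝ))) ∂volume ∂volume)
      = N^2 * ∫⁻ x, ∫⁻ y, ENNReal.ofReal (G' x) * ENNReal.ofReal (G' y)
        * ENNReal.ofReal (‖x - y‖ ^ (β - (d:ℝ))) ∂volume ∂volume := by
    calc (∫⁻ x, ∫⁻ y, ENNReal.ofReal (G x) * ENNReal.ofReal (G y)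
          * ENNReal.ofReal (‖x - y‖ ^ (β - (d:ℝ))) ∂volume ∂volume)
        = ∫⁻ x, ∫⁻ y, N^2 * (ENNReal.ofReal (G' x) * ENNReal.ofReal (G' y)
          * ENNReal.ofReal (‖x - y‖ ^ (β - (d:ℝ)))) ∂volume ∂volume := by
          apply lintegral_congr; intro x
          apply lintegral_congr; intro y
          rw [hGx x, hGx y]
          ring
      _ = ∫⁻ x, N^2 * ∫⁻ y, (ENNReal.ofReal (G' x) * ENNReal.ofReal (G' y)
          * ENNReal.ofReal (‖x - y‖ ^ (β - (d:ℝ)))) ∂volume ∂volume := by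
          apply lintegral_congr; intro x
          exact lintegral_const_mul' _ _ (ENNReal.pow_ne_top hNtop)
      _ = N^2 * ∫⁻ x, ∫⁻ y, (ENNReal.ofReal (G' x) * ENNReal.ofReal (G' y)
          * ENNReal.ofReal (‖x - y‖ ^ (β - (d:ℝ)))) ∂volume ∂volume :=
          lintegral_const_mul' _ _ (ENNReal.pow_ne_top hNtop)
  have hbound : (∫⁻ x, ∫⁻ y, ENNReal.ofReal (G x) * ENNReal.ofReal (G y)
        * ENNReal.ofReal (‖x - y‖ ^ (β - (d:ℝ))) ∂volume ∂volume) ≤ N^2 * C0 := by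
    rw [hscale]
    exact mul_le_mul_right hmain' _
  have hfin : N^2 * C0 ≠ ∞ := ENNReal.mul_ne_top (ENNReal.pow_ne_top hNtop) hC0top
  have hlin : (∫⁻ x, ENNReal.ofReal ‖∫ y, |f x| * |f y| * ‖x - y‖ ^ (β - (d:ℝ)) ∂volume‖ ∂volume)
      ≤ N^2 * C0 := by
    refine le_trans ?_ hbound
    calc (∫⁻ x, ENNReal.ofReal ‖∫ y, |f x| * |f y| * ‖x - y‖ ^ (β - (d:ℝ)) ∂volume‖ ∂volume)
        ≤ ∫⁻ x, ∫⁻ y, ENNReal.ofReal (|f x| * |f y| * ‖x - y‖ ^ (β - (d:ℝ))) ∂volume ∂volume := by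
          apply lintegral_mono
          intro x
          show ENNReal.ofReal ‖∫ y, |f x| * |f y| * ‖x - y‖ ^ (β - (d:ℝ)) ∂volume‖
              ≤ ∫⁻ y, ENNReal.ofReal (|f x| * |f y| * ‖x - y‖ ^ (β - (d:ℝ))) ∂volume
          rw [ofReal_norm]
          refine le_trans (enorm_integral_le_lintegral_enorm _) ?_
          apply lintegral_mono
          intro y
          show ‖|f x| * |f y| * ‖x - y‖ ^ (β - (d:ℝ))‖ₑ
              ≤ ENNReal.ofReal (|f x| * |f y| * ‖x - y‖ ^ (β - (d:ℝ)))
          rw [← ofReal_norm, Real.norm_eq_abs,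
            abs_of_nonneg (by positivity : (0:ℝ) ≤ |f x| * |f y| * ‖x - y‖ ^ (β - (d:ℝ)))]
      _ = ∫⁻ x, ∫⁻ y, ENNReal.ofReal (G x) * ENNReal.ofReal (G y)
          * ENNReal.ofReal (‖x - y‖ ^ (β - (d:ℝ))) ∂volume ∂volume := by
          apply lintegral_congr_ae
          filter_upwards [hff₀] with x hx
          apply lintegral_congr_ae
          filter_upwards [hff₀] with y hy
          rw [ENNReal.ofReal_mul (by positivity), ENNReal.ofReal_mul (abs_nonneg _), hx, hy]
  calc (∫ x, ∫ y, |f x| * |f y| * ‖x - y‖ ^ (β - (d:ℝ)) ∂volume ∂volume)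
      ≤ ‖∫ x, ∫ y, |f x| * |f y| * ‖x - y‖ ^ (β - (d:ℝ)) ∂volume ∂volume‖ :=
        le_trans (le_abs_self _) (le_of_eq (Real.norm_eq_abs _).symm)
    _ ≤ (∫⁻ x, ENNReal.ofReal ‖∫ y, |f x| * |f y| * ‖x - y‖ ^ (β - (d:ℝ)) ∂volume‖ ∂volume).toReal :=
        norm_integral_le_lintegral_norm _
    _ ≤ (N^2 * C0).toReal := ENNReal.toReal_mono hfin hlin
    _ = C0.toReal * N.toReal^2 := by
        rw [ENNReal.toReal_mul, ENNReal.toReal_pow]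
        ring
    _ ≤ (C0.toReal + 1) * N.toReal^2 := by nlinarith [sq_nonneg N.toReal]
end
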